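/- Let (X, μ, T) be an invertible measure-preserving system on a probability space and a : ℤ → ℂ a bounded sequence with ∑_{k=-n}^{n} |a_k| = O(n^(α-1)/(log n)^α) for some 1 < α ≤ 2. Then there is a constant C such that for every f ∈ L¹(μ) and every λ > 0, μ{x : sup_{n≥1} |∑_{1≤|k|≤n} a_k f(T^k x)/k| > λ} ≤ (C/λ)‖f‖₁. -/

import Mathlib

open Filter Real Finset MeasureTheory
open scoped ENNReal NNReal

/-- Bertrand series summability. -/
lemma bertrand_summable (α : ℝ) (hα1 : 1 < α) :
    Summable (fun n : ℕ => ((n : ℝ) * (Real.log n) ^ α)⁻¹) := by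
  set f : ℕ → ℝ := fun n => ((n : ℝ) * (Real.log n) ^ α)⁻¹ with hf
  have hα0 : (0:ℝ) < α := by linarith
  have hnonneg : ∀ n, 0 ≤ f n := by
    intro n
    apply inv_nonneg.mpr
    rcases Nat.lt_or_ge n 2 with h | h
    · interval_cases n <;>
        simp [f, Real.log_zero, Real.log_one, Real.zero_rpow (ne_of_gt hα0)]
    · have h1 : (1:ℝ) ≤ n := by exact_mod_cast Nat.one_le_of_lt h
      have hl : 0 ≤ Real.log n := Real.log_nonneg h1
      positivity
  have hmono : ∀ ⦃m n : ℕ⦄, 2 ≤ m → m ≤ n → f n ≤ f m := by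
    intro m n hm hmn
    have hm1 : (1:ℝ) < m := by exact_mod_cast hm.trans_lt' one_lt_two
    have hmn' : (m:ℝ) ≤ n := by exact_mod_cast hmn
    have hlm : 0 < Real.log m := Real.log_pos hm1
    have hln : Real.log m ≤ Real.log n := Real.log_le_log (by linarith) hmn'
    have h1 : 0 < (m:ℝ) * (Real.log m) ^ α := by positivity
    apply inv_anti₀ h1
    apply mul_le_mul hmn' (Real.rpow_le_rpow hlm.le hln hα0.le) (by positivity) (by linarith)
  -- shift by 1 and apply condensation
  rw [← summable_nat_add_iff 1]
  rw [← summable_condensed_iff_of_nonneg (fun n => hnonneg (n+1))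
    (fun m n hm hmn => hmono (by omega) (by omega))]
  rw [← summable_nat_add_iff 1]
  have hmaj : Summable (fun k : ℕ => ((Real.log 2) ^ α)⁻¹ * (1 / ((k:ℝ)+1) ^ α)) := by
    apply Summable.mul_left
    exact_mod_cast (Real.summable_one_div_nat_add_rpow 1 α).mpr hα1
  apply Summable.of_nonneg_of_le (fun k => by positivity) _ hmaj
  intro k
  have h2k : (1:ℝ) ≤ 2 ^ (k+1) := one_le_pow₀ (by norm_num)
  have hlog2 : 0 < Real.log 2 := Real.log_pos one_lt_two
  have hlogk : ((k:ℝ)+1) * Real.log 2 ≤ Real.log ((2:ℝ)^(k+1) + 1) := by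
    calc ((k:ℝ)+1) * Real.log 2 = Real.log ((2:ℝ)^(k+1)) := by
          rw [Real.log_pow]; push_cast; ring
      _ ≤ Real.log ((2:ℝ)^(k+1) + 1) := Real.log_le_log (by positivity) (by linarith)
  have hb : ((2:ℝ)^(k+1)) * ((((k:ℝ)+1) * Real.log 2) ^ α)
      ≤ ((2:ℝ)^(k+1) + 1) * (Real.log ((2:ℕ)^(k+1) + 1 : ℕ)) ^ α := by
    push_cast
    apply mul_le_mul (by linarith) (Real.rpow_le_rpow (by positivity) hlogk hα0.le)
      (by positivity) (by positivity)
  have key : f (2 ^ (k+1) + 1) ≤ (((2:ℝ)^(k+1)) * ((((k:ℝ)+1) * Real.log 2) ^ α))⁻¹ := by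
    apply inv_anti₀ (by positivity)
    simpa [f] using hb
  calc (2:ℝ) ^ (k+1) * f (2 ^ (k+1) + 1)
      ≤ (2:ℝ) ^ (k+1) * (((2:ℝ)^(k+1)) * ((((k:ℝ)+1) * Real.log 2) ^ α))⁻¹ := by
        apply mul_le_mul_of_nonneg_left key (by positivity)
    _ = ((((k:ℝ)+1) * Real.log 2) ^ α)⁻¹ := by
        rw [mul_inv]
        field_simp
    _ = ((Real.log 2) ^ α)⁻¹ * (1 / ((k:ℝ)+1) ^ α) := by
        rw [Real.mul_rpow (by positivity) hlog2.le]
        rw [mul_inv]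
        ring

lemma tele_sum (m N : ℕ) (hm : 1 ≤ m) (hmN : m ≤ N) :
    ∑ n ∈ Finset.Ico m N, (((n:ℝ))⁻¹ - (((n:ℝ))+1)⁻¹) = (m:ℝ)⁻¹ - (N:ℝ)⁻¹ := by
  rw [Finset.sum_Ico_eq_sum_range]
  have h : ∀ i ∈ Finset.range (N - m), ((m+i:ℕ):ℝ)⁻¹ - (((m+i:ℕ):ℝ)+1)⁻¹
      = (fun j => ((m+j:ℕ):ℝ)⁻¹) i - (fun j => ((m+j:ℕ):ℝ)⁻¹) (i+1) := by
    intro i _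
    simp only
    congr 2
    push_cast
    ring
  rw [Finset.sum_congr rfl h, Finset.sum_range_sub' (fun j => ((m+j:ℕ):ℝ)⁻¹)]
  norm_num [Nat.add_sub_cancel' hmN]

lemma abel_bound (α B C : ℝ) (hα1 : 1 < α) (hα2 : α ≤ 2) (a : ℤ → ℂ)
    (hB : ∀ k, ‖a k‖ ≤ B)
    (hC : ∀ n : ℕ, 2 ≤ n →
      ∑ k ∈ Finset.Icc (-(n:ℤ)) n, ‖a k‖ ≤ C * (n:ℝ)^(α-1) / (Real.log n)^α) :
    ∃ D : ℝ, 0 ≤ D ∧ ∀ N : ℕ,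
      ∑ k ∈ (Finset.Icc (-(N:ℤ)) N).erase 0, ‖a k‖ / (k.natAbs : ℝ) ≤ D := by
  have hα0 : (0:ℝ) < α := by linarith
  have hB0 : 0 ≤ B := le_trans (norm_nonneg _) (hB 0)
  set b : ℤ → ℝ := fun k => ‖a k‖ with hb
  have hbnn : ∀ k, 0 ≤ b k := fun k => norm_nonneg _
  set A : ℕ → ℝ := fun n => ∑ k ∈ Finset.Icc (-(n:ℤ)) n, b k with hA
  have hAnn : ∀ n, 0 ≤ A n := fun n => Finset.sum_nonneg fun k _ => hbnn k
  have hlog2 : (0:ℝ) < Real.log 2 := Real.log_pos one_lt_two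
  have hC0 : 0 ≤ C := by
    have h2 := (hAnn 2).trans (hC 2 le_rfl)
    have p1 : (0:ℝ) < (2:ℝ)^(α-1) := Real.rpow_pos_of_pos (by norm_num) _
    have p2 : (0:ℝ) < (Real.log 2)^α := Real.rpow_pos_of_pos hlog2 _
    by_contra h
    push_neg at h
    have : C * (2:ℝ)^(α-1) / (Real.log (2:ℕ))^α < 0 := by
      push_cast
      exact div_neg_of_neg_of_pos (mul_neg_of_neg_of_pos h p1) p2
    linarith [h2]
  have hA1 : A 1 ≤ 3 * B := by
    have h3 : Finset.Icc (-(1:ℤ)) 1 = {-1, 0, 1} := by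
      ext k; simp [Finset.mem_Icc]; omega
    simp only [hA, Nat.cast_one, h3]
    rw [Finset.sum_insert (by norm_num), Finset.sum_insert (by norm_num),
      Finset.sum_singleton]
    have := hB (-1); have := hB 0; have := hB 1
    simp only [hb] at *
    linarith
  -- the majorant sequence
  set ψ : ℕ → ℝ := fun n => 3*B * ((n:ℝ)*((n:ℝ)+1))⁻¹ + C * ((n:ℝ) * (Real.log n)^α)⁻¹ with hψ
  have hψnn : ∀ n, 0 ≤ ψ n := by
    intro n
    rcases Nat.eq_zero_or_pos n with h | h
    · subst h; simp [ψ, Real.log_zero, Real.zero_rpow (ne_of_gt hα0)]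
    · have h1 : (1:ℝ) ≤ n := by exact_mod_cast h
      rcases Nat.lt_or_ge n 2 with h2 | h2
      · have : n = 1 := by omega
        subst this
        simp [ψ, Real.log_one, Real.zero_rpow (ne_of_gt hα0)]
        positivity
      · have hn2 : (2:ℝ) ≤ n := by exact_mod_cast h2
        have hl : 0 < Real.log n := Real.log_pos (by linarith)
        positivity
  have hψsum : Summable ψ := by
    apply Summable.add
    · apply Summable.mul_left
      refine Summable.of_nonneg_of_le (fun n => by positivity) (fun n => ?_)
        (summable_one_div_nat_pow.mpr (le_refl 2))
      rcases Nat.eq_zero_or_pos n with h | h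
      · subst h; simp
      · have h1 : (1:ℝ) ≤ n := by exact_mod_cast h
        rw [one_div]
        apply inv_anti₀ (by positivity)
        nlinarith
    · exact (bertrand_summable α hα1).mul_left C
  set K : ℝ := ∑' n, ψ n with hK
  have hK0 : 0 ≤ K := tsum_nonneg hψnn
  -- key per-n bound
  have hψbound : ∀ n : ℕ, 1 ≤ n → A n * ((n:ℝ)*((n:ℝ)+1))⁻¹ ≤ ψ n := by
    intro n hn
    rcases Nat.lt_or_ge n 2 with h2 | h2
    · have : n = 1 := by omega
      subst this
      have : C * ((1:ℝ) * (Real.log 1)^α)⁻¹ = 0 := by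
        simp [Real.log_one, Real.zero_rpow (ne_of_gt hα0)]
      simp only [ψ, Nat.cast_one, this, add_zero]
      nlinarith [hA1, hB0]
    · have hn2 : (2:ℝ) ≤ n := by exact_mod_cast h2
      have hn1 : (1:ℝ) ≤ n := by linarith
      have hL : 0 < (Real.log n)^α := Real.rpow_pos_of_pos (Real.log_pos (by linarith)) _
      have hpow : (n:ℝ)^(α-1) ≤ n := by
        calc (n:ℝ)^(α-1) ≤ (n:ℝ)^(1:ℝ) := Real.rpow_le_rpow_of_exponent_le hn1 (by linarith)
          _ = n := Real.rpow_one _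
      have step1 : A n * ((n:ℝ)*((n:ℝ)+1))⁻¹
          ≤ (C * (n:ℝ)^(α-1) / (Real.log n)^α) * ((n:ℝ)*((n:ℝ)+1))⁻¹ :=
        mul_le_mul_of_nonneg_right (hC n h2) (by positivity)
      have step2 : (C * (n:ℝ)^(α-1) / (Real.log n)^α) * ((n:ℝ)*((n:ℝ)+1))⁻¹
          ≤ C * ((n:ℝ) * (Real.log n)^α)⁻¹ := by
        rw [div_mul_eq_mul_div, div_le_iff₀ hL]
        have hid : C * ((n:ℝ) * (Real.log n)^α)⁻¹ * (Real.log n)^α = C / (n:ℝ) := by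
          field_simp
        rw [hid, le_div_iff₀ (by positivity)]
        have expand : C * (n:ℝ)^(α-1) * ((n:ℝ)*((n:ℝ)+1))⁻¹ * (n:ℝ)
            = C * (n:ℝ)^(α-1) * ((n:ℝ)+1)⁻¹ := by
          field_simp
        rw [expand]
        have h1 : C * (n:ℝ)^(α-1) * ((n:ℝ)+1)⁻¹ ≤ C * (n:ℝ) * ((n:ℝ)+1)⁻¹ := by
          apply mul_le_mul_of_nonneg_right (mul_le_mul_of_nonneg_left hpow hC0) (by positivity)
        have h2' : C * (n:ℝ) * ((n:ℝ)+1)⁻¹ ≤ C := by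
          have hx : (n:ℝ) * ((n:ℝ)+1)⁻¹ ≤ 1 := by
            rw [← div_eq_mul_inv, div_le_one (by linarith)]
            linarith
          calc C * (n:ℝ) * ((n:ℝ)+1)⁻¹ = C * ((n:ℝ) * ((n:ℝ)+1)⁻¹) := by ring
            _ ≤ C * 1 := mul_le_mul_of_nonneg_left hx hC0
            _ = C := mul_one C
        linarith
      calc A n * ((n:ℝ)*((n:ℝ)+1))⁻¹ ≤ C * ((n:ℝ) * (Real.log n)^α)⁻¹ := step1.trans step2
        _ ≤ ψ n := by
          simp only [ψ]
          have : 0 ≤ 3*B * ((n:ℝ)*((n:ℝ)+1))⁻¹ := by positivity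
          linarith
  -- head bound
  have hhead : ∀ N : ℕ, 1 ≤ N → A N * (N:ℝ)⁻¹ ≤ 3*B + C / (Real.log 2)^α := by
    intro N hN
    have hp2 : (0:ℝ) < (Real.log 2)^α := Real.rpow_pos_of_pos hlog2 _
    rcases Nat.lt_or_ge N 2 with h2 | h2
    · have : N = 1 := by omega
      subst this
      simp only [Nat.cast_one, inv_one, mul_one]
      have : 0 ≤ C / (Real.log 2)^α := by positivity
      linarith [hA1]
    · have hn2 : (2:ℝ) ≤ N := by exact_mod_cast h2
      have hn1 : (1:ℝ) ≤ N := by linarith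
      have hlN : Real.log 2 ≤ Real.log N := Real.log_le_log (by norm_num) hn2
      have hL : 0 < (Real.log N)^α := Real.rpow_pos_of_pos (Real.log_pos (by linarith)) _
      have hpow : (N:ℝ)^(α-1) ≤ N := by
        calc (N:ℝ)^(α-1) ≤ (N:ℝ)^(1:ℝ) := Real.rpow_le_rpow_of_exponent_le hn1 (by linarith)
          _ = N := Real.rpow_one _
      have step1 : A N * (N:ℝ)⁻¹ ≤ (C * (N:ℝ)^(α-1) / (Real.log N)^α) * (N:ℝ)⁻¹ :=
        mul_le_mul_of_nonneg_right (hC N h2) (by positivity)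
      have step2 : (C * (N:ℝ)^(α-1) / (Real.log N)^α) * (N:ℝ)⁻¹ ≤ C / (Real.log N)^α := by
        rw [div_mul_eq_mul_div, div_le_div_iff₀ hL hL]
        have : C * (N:ℝ)^(α-1) * (N:ℝ)⁻¹ ≤ C := by
          have h1 : C * (N:ℝ)^(α-1) ≤ C * N := mul_le_mul_of_nonneg_left hpow hC0
          have h2' : C * (N:ℝ) * (N:ℝ)⁻¹ = C := by field_simp
          calc C * (N:ℝ)^(α-1) * (N:ℝ)⁻¹ ≤ C * (N:ℝ) * (N:ℝ)⁻¹ :=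
              mul_le_mul_of_nonneg_right h1 (by positivity)
            _ = C := h2'
        nlinarith [hL]
      have step3 : C / (Real.log N)^α ≤ C / (Real.log 2)^α := by
        apply div_le_div_of_nonneg_left hC0 hp2 <;> try exact hL
        exact Real.rpow_le_rpow hlog2.le hlN hα0.le
      have : 0 ≤ 3*B := by linarith
      linarith [step1.trans (step2.trans step3)]
  refine ⟨3*B + C / (Real.log 2)^α + K, by positivity, ?_⟩
  intro N
  rcases Nat.eq_zero_or_pos N with h | hN1
  · subst h
    simp only [Nat.cast_zero, neg_zero, Finset.Icc_self, Finset.erase_singleton,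
      Finset.sum_empty]
    positivity
  set E := (Finset.Icc (-(N:ℤ)) N).erase 0 with hE
  have hmem : ∀ k ∈ E, 1 ≤ k.natAbs ∧ k.natAbs ≤ N := by
    intro k hk
    simp only [hE, Finset.mem_erase, Finset.mem_Icc] at hk
    omega
  -- per-k decomposition
  have hdecomp : ∀ k ∈ E, b k / (k.natAbs : ℝ)
      = b k * (N:ℝ)⁻¹ + ∑ n ∈ Finset.Ico 1 N,
          (if k.natAbs ≤ n then b k * (((n:ℝ))⁻¹ - (((n:ℝ))+1)⁻¹) else 0) := by
    intro k hk
    obtain ⟨hm1, hmN⟩ := hmem k hk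
    have hfilter : (Finset.Ico 1 N).filter (fun n => k.natAbs ≤ n) = Finset.Ico k.natAbs N := by
      ext n
      simp only [Finset.mem_filter, Finset.mem_Ico]
      omega
    rw [← Finset.sum_filter, hfilter, ← Finset.mul_sum, tele_sum _ _ hm1 hmN,
      div_eq_mul_inv]
    ring
  calc ∑ k ∈ E, b k / (k.natAbs : ℝ)
      = ∑ k ∈ E, (b k * (N:ℝ)⁻¹ + ∑ n ∈ Finset.Ico 1 N,
          (if k.natAbs ≤ n then b k * (((n:ℝ))⁻¹ - (((n:ℝ))+1)⁻¹) else 0)) :=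
        Finset.sum_congr rfl hdecomp
    _ = (∑ k ∈ E, b k) * (N:ℝ)⁻¹ + ∑ n ∈ Finset.Ico 1 N, ∑ k ∈ E,
          (if k.natAbs ≤ n then b k * (((n:ℝ))⁻¹ - (((n:ℝ))+1)⁻¹) else 0) := by
        rw [Finset.sum_add_distrib, ← Finset.sum_mul, Finset.sum_comm]
    _ ≤ A N * (N:ℝ)⁻¹ + ∑ n ∈ Finset.Ico 1 N, ψ n := by
        apply add_le_add
        · apply mul_le_mul_of_nonneg_right _ (by positivity)
          exact Finset.sum_le_sum_of_subset_of_nonneg (Finset.erase_subset _ _)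
            (fun k _ _ => hbnn k)
        · apply Finset.sum_le_sum
          intro n hn
          have hn1 : 1 ≤ n := (Finset.mem_Ico.mp hn).1
          have hn1' : (1:ℝ) ≤ n := by exact_mod_cast hn1
          have hcnn : (0:ℝ) ≤ ((n:ℝ))⁻¹ - (((n:ℝ))+1)⁻¹ := by
            rw [sub_nonneg]
            apply inv_anti₀ (by linarith) (by linarith)
          calc ∑ k ∈ E, (if k.natAbs ≤ n then b k * (((n:ℝ))⁻¹ - (((n:ℝ))+1)⁻¹) else 0)
              = (∑ k ∈ E.filter (fun k => k.natAbs ≤ n), b k)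
                  * (((n:ℝ))⁻¹ - (((n:ℝ))+1)⁻¹) := by
                rw [← Finset.sum_filter, ← Finset.sum_mul]
            _ ≤ A n * (((n:ℝ))⁻¹ - (((n:ℝ))+1)⁻¹) := by
                apply mul_le_mul_of_nonneg_right _ hcnn
                apply Finset.sum_le_sum_of_subset_of_nonneg _ (fun k _ _ => hbnn k)
                intro k hk
                simp only [hE, Finset.mem_filter, Finset.mem_erase, Finset.mem_Icc] at hk
                simp only [Finset.mem_Icc]
                omega
            _ = A n * ((n:ℝ)*((n:ℝ)+1))⁻¹ := by
                congr 1
                have hn0 : (n:ℝ) ≠ 0 := by linarith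
                field_simp
                ring
            _ ≤ ψ n := hψbound n hn1
    _ ≤ (3*B + C/(Real.log 2)^α) + K := by
        apply add_le_add (hhead N hN1)
        exact Summable.sum_le_tsum _ (fun n _ => hψnn n) hψsum


/-- The `k`-th power (`k ∈ ℤ`) of an invertible transformation `T` with inverse `S`. -/
noncomputable def zpowIter {X : Type*} (T S : X → X) (k : ℤ) : X → X :=
  fun x => if 0 ≤ k then T^[k.toNat] x else S^[(-k).toNat] x

/-- Theorem 2.2 (weak (1,1) maximal inequality): for a bounded sequence `a` with
`∑_{|k|≤n}|a_k| = O(n^(α-1)/(log n)^α)`, `1 < α ≤ 2`, there is a constant `C`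
such that for all `f ∈ L¹` and `λ > 0`,
`μ{x : sup_{n≥1} |∑_{1≤|k|≤n} a_k f(T^k x)/k| > λ} ≤ (C/λ)‖f‖₁`. -/
theorem Malpha_weak_one_one {X : Type*} [MeasurableSpace X] (μ : Measure X)
    [IsProbabilityMeasure μ] (T S : X → X)
    (hTS : Function.LeftInverse S T ∧ Function.RightInverse S T)
    (hT : MeasurePreserving T μ μ) (hS : MeasurePreserving S μ μ)
    (α : ℝ) (hα1 : 1 < α) (hα2 : α ≤ 2) (a : ℤ → ℂ)
    (hbdd : ∃ B : ℝ, ∀ k : ℤ, ‖a k‖ ≤ B)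
    (hM : ∃ C : ℝ, ∀ n : ℕ, 2 ≤ n →
      ∑ k ∈ Finset.Icc (-(n : ℤ)) n, ‖a k‖ ≤ C * (n : ℝ) ^ (α - 1) / (Real.log n) ^ α) :
    ∃ C : ℝ, ∀ f : X → ℂ, Integrable f μ → ∀ lam : ℝ, 0 < lam →
      μ {x : X | ∃ n : ℕ, 1 ≤ n ∧
          lam < ‖∑ k ∈ (Finset.Icc (-(n : ℤ)) n).erase 0,
            a k * f (zpowIter T S k x) / (k : ℂ)‖} ≤
        ENNReal.ofReal ((C / lam) * ∫ x, ‖f x‖ ∂μ) := by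
  obtain ⟨B, hB⟩ := hbdd
  obtain ⟨C₀, hC⟩ := hM
  obtain ⟨D, hD0, hDbound⟩ := abel_bound α B C₀ hα1 hα2 a hB hC
  refine ⟨D, ?_⟩
  intro f hf lam hlam
  set φ : ℤ → X → X := fun k => zpowIter T S k with hφdef
  have hφmp : ∀ k, MeasurePreserving (φ k) μ μ := by
    intro k
    by_cases h : 0 ≤ k
    · have : φ k = T^[k.toNat] := by funext x; simp [hφdef, zpowIter, h]
      rw [this]; exact hT.iterate _
    · have : φ k = S^[(-k).toNat] := by funext x; simp [hφdef, zpowIter, h]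
      rw [this]; exact hS.iterate _
  have hcomp : ∀ k, AEStronglyMeasurable (fun x => f (φ k x)) μ :=
    fun k => hf.aestronglyMeasurable.comp_measurePreserving (hφmp k)
  set g : X → ℝ≥0∞ :=
    fun x => ∑' k : ℤ, (‖a k / (k:ℂ)‖₊ : ℝ≥0∞) * (‖f (φ k x)‖₊ : ℝ≥0∞) with hg
  have hgmeas : AEMeasurable g μ :=
    AEMeasurable.ennreal_tsum fun k => (hcomp k).enorm.const_mul _
  -- bound on the coefficient sum
  have hnormid : ∀ k : ℤ, ‖a k / (k:ℂ)‖ = ‖a k‖ / (k.natAbs : ℝ) := by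
    intro k
    rw [norm_div, Complex.norm_intCast, Nat.cast_natAbs, Int.cast_abs]
  have hcoeff : ∑' k : ℤ, (‖a k / (k:ℂ)‖₊ : ℝ≥0∞) ≤ ENNReal.ofReal D := by
    apply Summable.tsum_le_of_sum_le ENNReal.summable
    intro s
    set N : ℕ := s.sup Int.natAbs with hN
    have hsub : s ⊆ Finset.Icc (-(N:ℤ)) N := by
      intro k hk
      have : k.natAbs ≤ N := Finset.le_sup hk
      simp only [Finset.mem_Icc]
      omega
    calc ∑ k ∈ s, (‖a k / (k:ℂ)‖₊ : ℝ≥0∞)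
        ≤ ∑ k ∈ Finset.Icc (-(N:ℤ)) N, (‖a k / (k:ℂ)‖₊ : ℝ≥0∞) :=
          Finset.sum_le_sum_of_subset hsub
      _ = ∑ k ∈ (Finset.Icc (-(N:ℤ)) N).erase 0, (‖a k / (k:ℂ)‖₊ : ℝ≥0∞) :=
          (Finset.sum_erase _ (by simp)).symm
      _ = ENNReal.ofReal (∑ k ∈ (Finset.Icc (-(N:ℤ)) N).erase 0, ‖a k / (k:ℂ)‖) := by
          rw [ENNReal.ofReal_sum_of_nonneg (fun k _ => norm_nonneg _)]
          exact Finset.sum_congr rfl fun k _ => (ofReal_norm _).symm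
      _ ≤ ENNReal.ofReal D := by
          apply ENNReal.ofReal_le_ofReal
          calc ∑ k ∈ (Finset.Icc (-(N:ℤ)) N).erase 0, ‖a k / (k:ℂ)‖
              = ∑ k ∈ (Finset.Icc (-(N:ℤ)) N).erase 0, ‖a k‖ / (k.natAbs : ℝ) :=
                Finset.sum_congr rfl fun k _ => hnormid k
            _ ≤ D := hDbound N
  -- pointwise domination
  have hpt : {x : X | ∃ n : ℕ, 1 ≤ n ∧
      lam < ‖∑ k ∈ (Finset.Icc (-(n : ℤ)) n).erase 0,
        a k * f (zpowIter T S k x) / (k : ℂ)‖} ⊆ {x : X | ENNReal.ofReal lam ≤ g x} := by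
    rintro x ⟨n, hn1, hlt⟩
    have h1 : ENNReal.ofReal lam
        ≤ (‖∑ k ∈ (Finset.Icc (-(n : ℤ)) n).erase 0,
            a k * f (zpowIter T S k x) / (k : ℂ)‖₊ : ℝ≥0∞) := by
      rw [← enorm_eq_nnnorm, ← ofReal_norm]
      exact ENNReal.ofReal_le_ofReal hlt.le
    refine le_trans h1 ?_
    calc (‖∑ k ∈ (Finset.Icc (-(n : ℤ)) n).erase 0,
            a k * f (zpowIter T S k x) / (k : ℂ)‖₊ : ℝ≥0∞)
        ≤ ((∑ k ∈ (Finset.Icc (-(n : ℤ)) n).erase 0,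
            ‖a k * f (zpowIter T S k x) / (k : ℂ)‖₊ : ℝ≥0) : ℝ≥0∞) :=
          ENNReal.coe_le_coe.mpr (nnnorm_sum_le _ _)
      _ = ∑ k ∈ (Finset.Icc (-(n : ℤ)) n).erase 0,
            (‖a k / (k:ℂ)‖₊ : ℝ≥0∞) * (‖f (φ k x)‖₊ : ℝ≥0∞) := by
          rw [ENNReal.coe_finset_sum]
          refine Finset.sum_congr rfl fun k _ => ?_
          rw [mul_div_right_comm, nnnorm_mul, ENNReal.coe_mul]
      _ ≤ g x := ENNReal.sum_le_tsum _
  -- integral computation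
  have hlint : ∫⁻ x, g x ∂μ ≤ ENNReal.ofReal D * ENNReal.ofReal (∫ x, ‖f x‖ ∂μ) := by
    have hterm : ∀ k : ℤ, ∫⁻ x, (‖a k / (k:ℂ)‖₊ : ℝ≥0∞) * (‖f (φ k x)‖₊ : ℝ≥0∞) ∂μ
        = (‖a k / (k:ℂ)‖₊ : ℝ≥0∞) * ∫⁻ y, (‖f y‖₊ : ℝ≥0∞) ∂μ := by
      intro k
      rw [lintegral_const_mul' _ _ ENNReal.coe_ne_top]
      congr 1
      have hmk := (hφmp k).map_eq
      calc ∫⁻ x, (‖f (φ k x)‖₊ : ℝ≥0∞) ∂μ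
          = ∫⁻ y, (‖f y‖₊ : ℝ≥0∞) ∂(Measure.map (φ k) μ) :=
            (lintegral_map' (by rw [hmk]; exact hf.aestronglyMeasurable.enorm)
              (hφmp k).measurable.aemeasurable).symm
        _ = ∫⁻ y, (‖f y‖₊ : ℝ≥0∞) ∂μ := by rw [hmk]
    calc ∫⁻ x, g x ∂μ
        = ∑' k : ℤ, ∫⁻ x, (‖a k / (k:ℂ)‖₊ : ℝ≥0∞) * (‖f (φ k x)‖₊ : ℝ≥0∞) ∂μ :=
          lintegral_tsum fun k => ((hcomp k).enorm.const_mul _)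
      _ = (∑' k : ℤ, (‖a k / (k:ℂ)‖₊ : ℝ≥0∞)) * ∫⁻ y, (‖f y‖₊ : ℝ≥0∞) ∂μ := by
          rw [← ENNReal.tsum_mul_right]
          exact tsum_congr hterm
      _ ≤ ENNReal.ofReal D * ∫⁻ y, (‖f y‖₊ : ℝ≥0∞) ∂μ := mul_le_mul_left hcoeff _
      _ = ENNReal.ofReal D * ENNReal.ofReal (∫ x, ‖f x‖ ∂μ) := by
          exact congrArg _ (ofReal_integral_norm_eq_lintegral_enorm hf).symm
  -- Chebyshev and conclusion
  have hne0 : ENNReal.ofReal lam ≠ 0 := (ENNReal.ofReal_pos.mpr hlam).ne'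
  calc μ {x : X | ∃ n : ℕ, 1 ≤ n ∧
          lam < ‖∑ k ∈ (Finset.Icc (-(n : ℤ)) n).erase 0,
            a k * f (zpowIter T S k x) / (k : ℂ)‖}
      ≤ μ {x : X | ENNReal.ofReal lam ≤ g x} := measure_mono hpt
    _ ≤ (∫⁻ x, g x ∂μ) / ENNReal.ofReal lam :=
        meas_ge_le_lintegral_div hgmeas hne0 ENNReal.ofReal_ne_top
    _ ≤ (ENNReal.ofReal D * ENNReal.ofReal (∫ x, ‖f x‖ ∂μ)) / ENNReal.ofReal lam :=
        ENNReal.div_le_div_right hlint _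
    _ = ENNReal.ofReal ((D / lam) * ∫ x, ‖f x‖ ∂μ) := by
        rw [← ENNReal.ofReal_mul hD0, ← ENNReal.ofReal_div_of_pos hlam]
        congr 1
        ring
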